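/- Let K be a field of characteristic 0 and q a prime with a primitive q-th root of unity in K. In the field F₀ = Frac(K[[V,U]]), the element a = U/(U−V) is not a d-th power in F₀ for any d > 1; consequently F₀(a^{1/q})/F₀ is a cyclic extension of degree q. -/

import Mathlib

open PowerSeries IntermediateField


private lemma order_pow_aux {R : Type*} [CommRing R] [IsDomain R] (f : PowerSeries R) (n : ℕ) :
    (f ^ n).order = n * f.order := by
  induction n with
  | zero => simp
  | succ n ih =>
    rw [pow_succ, PowerSeries.order_mul, ih, Nat.cast_succ]
    ring

private lemma not_power_aux (K : Type*) [Field K] (d : ℕ) (hd : 1 < d)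
    (y : FractionRing (PowerSeries (PowerSeries K))) :
    y ^ d ≠ algebraMap (PowerSeries (PowerSeries K)) _ (PowerSeries.X) /
        algebraMap (PowerSeries (PowerSeries K)) _
          (PowerSeries.X - PowerSeries.C (PowerSeries.X : PowerSeries K)) := by
  intro hy
  have hw : (PowerSeries.X - PowerSeries.C (PowerSeries.X : PowerSeries K) :
      PowerSeries (PowerSeries K)) ≠ 0 := by
    intro h
    have := congrArg (PowerSeries.constantCoeff (R := PowerSeries K)) h
    simp at this
  have hwF : algebraMap (PowerSeries (PowerSeries K))
      (FractionRing (PowerSeries (PowerSeries K)))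
      (PowerSeries.X - PowerSeries.C (PowerSeries.X : PowerSeries K)) ≠ 0 :=
    (map_ne_zero_iff _ (IsFractionRing.injective _ _)).mpr hw
  have hww : (PowerSeries.X - PowerSeries.C (PowerSeries.X : PowerSeries K) :
      PowerSeries (PowerSeries K)).order = 0 := by
    refine le_antisymm (PowerSeries.order_le 0 ?_) (zero_le (a := _))
    simp
  obtain ⟨⟨r, s⟩, hrs⟩ := IsLocalization.surj (nonZeroDivisors (PowerSeries (PowerSeries K))) y
  have hs0 : (s : PowerSeries (PowerSeries K)) ≠ 0 := nonZeroDivisors.ne_zero s.2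
  have key : r ^ d * (PowerSeries.X - PowerSeries.C (PowerSeries.X : PowerSeries K)) =
      PowerSeries.X * (s : PowerSeries (PowerSeries K)) ^ d := by
    apply IsFractionRing.injective (PowerSeries (PowerSeries K))
      (FractionRing (PowerSeries (PowerSeries K)))
    rw [map_mul, map_mul, map_pow, map_pow, ← hrs, mul_pow, hy,
      div_mul_eq_mul_div, div_mul_cancel₀ _ hwF]
  have hX0 : (PowerSeries.X : PowerSeries (PowerSeries K)) ≠ 0 := PowerSeries.X_ne_zero
  have hr0 : r ≠ 0 := by
    intro h
    rw [h, zero_pow (by omega), zero_mul] at key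
    exact (mul_ne_zero hX0 (pow_ne_zero _ hs0)) key.symm
  have horder := congrArg PowerSeries.order key
  rw [PowerSeries.order_mul, PowerSeries.order_mul, order_pow_aux, order_pow_aux,
    hww, PowerSeries.order_X, add_zero] at horder
  lift r.order to ℕ using (PowerSeries.order_finite_iff_ne_zero.mpr hr0).ne with m hm
  lift (s : PowerSeries (PowerSeries K)).order to ℕ
    using (PowerSeries.order_finite_iff_ne_zero.mpr hs0).ne with n hn
  have heq : d * m = 1 + d * n := by exact_mod_cast horder
  have h1 : d ∣ 1 := by
    have h := Nat.dvd_sub (⟨m, rfl⟩ : d ∣ d * m) (⟨n, rfl⟩ : d ∣ d * n)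
    rw [heq, Nat.add_sub_cancel] at h
    exact h
  exact absurd (Nat.le_of_dvd one_pos h1) (by omega)


private lemma kummer_aux (F : Type*) [Field F] (q : ℕ) (hq : q.Prime)
    (ζ : F) (hζ : IsPrimitiveRoot ζ q) (a : F) (hb : ∀ b : F, b ^ q ≠ a)
    (α : AlgebraicClosure F) (hα : α ^ q = algebraMap F _ a) :
    Module.finrank F F⟮α⟯ = q ∧ IsGalois F F⟮α⟯ ∧ IsCyclic (F⟮α⟯ ≃ₐ[F] F⟮α⟯) := by
  have H : Irreducible (Polynomial.X ^ q - Polynomial.C a) :=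
    X_pow_sub_C_irreducible_of_prime hq hb
  have hK : (primitiveRoots q F).Nonempty :=
    ⟨ζ, (mem_primitiveRoots hq.pos).mpr hζ⟩
  have haev : (Polynomial.aeval α) (Polynomial.X ^ q - Polynomial.C a) = 0 := by
    simp [hα]
  have hint : IsIntegral F α :=
    ⟨Polynomial.X ^ q - Polynomial.C a, Polynomial.monic_X_pow_sub_C a hq.ne_zero, haev⟩
  have hmin : minpoly F α = Polynomial.X ^ q - Polynomial.C a :=
    (minpoly.eq_of_irreducible_of_monic H haev
      (Polynomial.monic_X_pow_sub_C a hq.ne_zero)).symm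
  have hfin : Module.finrank F F⟮α⟯ = q := by
    rw [IntermediateField.adjoin.finrank hint, hmin, Polynomial.natDegree_X_pow_sub_C]
  haveI : FiniteDimensional F F⟮α⟯ := IntermediateField.adjoin.finiteDimensional hint
  have hgen : (AdjoinSimple.gen F α) ^ q = algebraMap F F⟮α⟯ a := by
    apply Subtype.ext
    push_cast
    rw [IntermediateField.AdjoinSimple.coe_gen, hα]
  have htop : F⟮AdjoinSimple.gen F α⟯ = ⊤ := by
    apply IntermediateField.map_injective (IntermediateField.val F⟮α⟯)
    have h1 := IntermediateField.lift_adjoin_simple (F := F)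
      (E := AlgebraicClosure F) F⟮α⟯ (AdjoinSimple.gen F α)
    have h2 := IntermediateField.lift_top (F := F) (K := F⟮α⟯)
    unfold IntermediateField.lift at h1 h2
    rw [h1, h2, IntermediateField.AdjoinSimple.coe_gen]
  haveI hsp : Polynomial.IsSplittingField F F⟮α⟯ (Polynomial.X ^ q - Polynomial.C a) := by
    have hsp' := isSplittingField_X_pow_sub_C_of_root_adjoin_eq_top
      (a := a) (by rw [hfin]; exact hK) (by rw [hfin]; exact hgen) htop
    rwa [hfin] at hsp'
  haveI : NeZero q := ⟨hq.ne_zero⟩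
  exact ⟨hfin, isGalois_of_isSplittingField_X_pow_sub_C hK H F⟮α⟯,
    isCyclic_of_isSplittingField_X_pow_sub_C hK H F⟮α⟯⟩

/-- In `F₀ = Frac(K[[V,U]])` (`K` of characteristic 0 containing a primitive `q`-th
root of unity, `q` prime), the element `a = U/(U−V)` is not a `d`-th power for any
`d > 1`; consequently `F₀(a^{1/q})/F₀` is a cyclic extension of degree `q`. -/
theorem frac_power_series_two_vars_not_power_and_cyclic
    (K : Type*) [Field K] [CharZero K] (q : ℕ) (hq : q.Prime)
    (ζ : K) (hζ : IsPrimitiveRoot ζ q) :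
    ∀ a : FractionRing (PowerSeries (PowerSeries K)),
      a = algebraMap (PowerSeries (PowerSeries K)) _ (PowerSeries.X) /
          algebraMap (PowerSeries (PowerSeries K)) _
            (PowerSeries.X - PowerSeries.C (PowerSeries.X : PowerSeries K)) →
      (∀ d : ℕ, 1 < d → ∀ y : FractionRing (PowerSeries (PowerSeries K)), y ^ d ≠ a) ∧
      (∀ α : AlgebraicClosure (FractionRing (PowerSeries (PowerSeries K))),
        α ^ q = algebraMap _ _ a →
        Module.finrank (FractionRing (PowerSeries (PowerSeries K)))
          (IntermediateField.adjoin (FractionRing (PowerSeries (PowerSeries K))) {α}) = q ∧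
        IsGalois (FractionRing (PowerSeries (PowerSeries K)))
          (IntermediateField.adjoin (FractionRing (PowerSeries (PowerSeries K))) {α}) ∧
        IsCyclic ((IntermediateField.adjoin (FractionRing (PowerSeries (PowerSeries K))) {α}) ≃ₐ[FractionRing (PowerSeries (PowerSeries K))]
          (IntermediateField.adjoin (FractionRing (PowerSeries (PowerSeries K))) {α}))) := by
  intro a ha
  subst ha
  have hnot := fun d hd y => not_power_aux K d hd y
  refine ⟨hnot, ?_⟩
  intro α hα
  let f : K →+* FractionRing (PowerSeries (PowerSeries K)) :=
    (algebraMap (PowerSeries (PowerSeries K)) _).comp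
      ((PowerSeries.C (R := PowerSeries K)).comp (PowerSeries.C (R := K)))
  have hζF : IsPrimitiveRoot (f ζ) q := hζ.map_of_injective f.injective
  exact kummer_aux _ q hq (f ζ) hζF _ (fun b => hnot q hq.one_lt b) α hα
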